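/- Let C ⊆ ℝ be a fat Cantor set (closed, nowhere dense, quasi-dense, of positive measure). Then C × C ⊆ ℝ² is quasi-dense with respect to 2-dimensional Lebesgue measure, but C × C is not a local Lipschitz one set, since ℝ² \ (C × C) is connected. -/

import Mathlib

open scoped Classical
open Filter Metric Topology MeasureTheory Set ENNReal

/-- The local Lipschitz derivative. -/
noncomputable def LLip {X Y : Type*} [MetricSpace X] [MetricSpace Y] (f : X → Y) (x : X) : ℝ≥0∞ :=
  ⨅ (r : ℝ) (_ : 0 < r), ⨆ (u : X) (_ : u ∈ ball x r) (v : X) (_ : v ∈ ball x r) (_ : u ≠ v),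
    ENNReal.ofReal (dist (f u) (f v) / dist u v)

noncomputable def pt (a b : ℝ) : EuclideanSpace ℝ (Fin 2) :=
  (EuclideanSpace.equiv (Fin 2) ℝ).symm ![a, b]

@[simp] lemma pt_zero (a b : ℝ) : pt a b 0 = a := rfl
@[simp] lemma pt_one (a b : ℝ) : pt a b 1 = b := rfl

lemma pt_eta (q : EuclideanSpace ℝ (Fin 2)) : pt (q 0) (q 1) = q := by
  ext i
  fin_cases i <;> rfl

lemma cont_pt_left (b : ℝ) : Continuous fun a => pt a b := by
  apply (EuclideanSpace.equiv (Fin 2) ℝ).symm.continuous.comp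
  apply continuous_pi
  intro i
  fin_cases i
  · simpa using continuous_id'
  · simpa using continuous_const

lemma cont_pt_right (a : ℝ) : Continuous fun b => pt a b := by
  apply (EuclideanSpace.equiv (Fin 2) ℝ).symm.continuous.comp
  apply continuous_pi
  intro i
  fin_cases i
  · simpa using continuous_const
  · simpa using continuous_id'

lemma vol_prod_set (A B : Set ℝ) (hA : MeasurableSet A) (hB : MeasurableSet B) :
    volume {q : EuclideanSpace ℝ (Fin 2) | q 0 ∈ A ∧ q 1 ∈ B} = volume A * volume B := by
  have e := EuclideanSpace.volume_preserving_symm_measurableEquiv_toLp (ι := Fin 2)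
  have hT : MeasurableSet (Set.univ.pi ![A, B]) := by
    apply MeasurableSet.univ_pi
    intro i; fin_cases i <;> simpa
  have h1 : (MeasurableEquiv.toLp 2 (Fin 2 → ℝ)).symm ⁻¹' (Set.univ.pi ![A, B])
      = {q : EuclideanSpace ℝ (Fin 2) | q 0 ∈ A ∧ q 1 ∈ B} := by
    ext q
    simp only [Set.mem_preimage, Set.mem_pi, Set.mem_univ, forall_true_left, Set.mem_setOf_eq,
      Fin.forall_fin_two]
    rfl
  have := e.measure_preimage hT.nullMeasurableSet
  rw [h1] at this
  rw [this, volume_pi_pi]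
  simp [Fin.prod_univ_two]

lemma dist_le_coord (q p : EuclideanSpace ℝ (Fin 2)) :
    dist q p ≤ dist (q 0) (p 0) + dist (q 1) (p 1) := by
  rw [EuclideanSpace.dist_eq, Fin.sum_univ_two]
  set a := dist (q 0) (p 0) with ha
  set b := dist (q 1) (p 1) with hb
  have h0 : 0 ≤ a := dist_nonneg
  have h1 : 0 ≤ b := dist_nonneg
  calc √(a ^ 2 + b ^ 2) ≤ √((a + b) ^ 2) := Real.sqrt_le_sqrt (by nlinarith)
    _ = a + b := Real.sqrt_sq (by positivity)

lemma llip_zero_fderiv {f : EuclideanSpace ℝ (Fin 2) → ℝ} {x : EuclideanSpace ℝ (Fin 2)}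
    (h : LLip f x = 0) : HasFDerivAt f (0 : EuclideanSpace ℝ (Fin 2) →L[ℝ] ℝ) x := by
  have key : (fun x' => f x' - f x - (0 : EuclideanSpace ℝ (Fin 2) →L[ℝ] ℝ) (x' - x))
      =o[𝓝 x] fun x' => x' - x := by
    rw [Asymptotics.isLittleO_iff]
    intro c hc
    have h2 : LLip f x < ENNReal.ofReal c := by rw [h]; exact ENNReal.ofReal_pos.2 hc
    rw [LLip, iInf_lt_iff] at h2
    obtain ⟨r, h2⟩ := h2
    rw [iInf_lt_iff] at h2
    obtain ⟨hr, h2⟩ := h2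
    filter_upwards [Metric.ball_mem_nhds x hr] with u hu
    simp only [ContinuousLinearMap.zero_apply, sub_zero]
    rcases eq_or_ne u x with rfl | hne
    · simp
    · have hterm : ENNReal.ofReal (dist (f u) (f x) / dist u x) < ENNReal.ofReal c :=
        by
          refine lt_of_le_of_lt ?_ h2
          have s1 : ENNReal.ofReal (dist (f u) (f x) / dist u x)
              ≤ ⨆ (_ : u ≠ x), ENNReal.ofReal (dist (f u) (f x) / dist u x) :=
            le_iSup (fun _ : u ≠ x => ENNReal.ofReal (dist (f u) (f x) / dist u x)) hne
          have s2 : ENNReal.ofReal (dist (f u) (f x) / dist u x)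
              ≤ ⨆ v ∈ ball x r, ⨆ (_ : u ≠ v), ENNReal.ofReal (dist (f u) (f v) / dist u v) :=
            le_iSup₂_of_le x (mem_ball_self hr) s1
          exact le_iSup₂_of_le u hu s2
      have hd : 0 < dist u x := dist_pos.2 hne
      have hlt : dist (f u) (f x) / dist u x < c := by
        rwa [ENNReal.ofReal_lt_ofReal_iff hc] at hterm
      have := (div_lt_iff₀ hd).1 hlt
      calc ‖f u - f x‖ = dist (f u) (f x) := (dist_eq_norm _ _).symm
        _ ≤ c * dist u x := this.le
        _ = c * ‖u - x‖ := by rw [dist_eq_norm]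
  exact hasFDerivAt_iff_isLittleO.mpr key

lemma const_on_ball {f : EuclideanSpace ℝ (Fin 2) → ℝ} {S : Set (EuclideanSpace ℝ (Fin 2))}
    (hder : ∀ x ∈ S, HasFDerivAt f (0 : EuclideanSpace ℝ (Fin 2) →L[ℝ] ℝ) x)
    {y : EuclideanSpace ℝ (Fin 2)} {ρ : ℝ} (hsub : ball y ρ ⊆ S)
    {u v : EuclideanSpace ℝ (Fin 2)} (hu : u ∈ ball y ρ) (hv : v ∈ ball y ρ) : f u = f v := by
  have := Convex.norm_image_sub_le_of_norm_hasFDerivWithin_le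
    (f' := fun _ => (0 : EuclideanSpace ℝ (Fin 2) →L[ℝ] ℝ)) (C := 0)
    (fun x hx => ((hder x (hsub hx)).hasFDerivWithinAt)) (fun x hx => by simp)
    (convex_ball y ρ) hu hv
  simp only [zero_mul, norm_le_zero_iff, sub_eq_zero] at this
  exact this.symm

lemma const_on_S {f : EuclideanSpace ℝ (Fin 2) → ℝ} (hf : Continuous f)
    {S : Set (EuclideanSpace ℝ (Fin 2))} (hSo : IsOpen S) (hSc : IsPreconnected S)
    (hder : ∀ x ∈ S, HasFDerivAt f (0 : EuclideanSpace ℝ (Fin 2) →L[ℝ] ℝ) x)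
    {a : EuclideanSpace ℝ (Fin 2)} (ha : a ∈ S) : Set.EqOn f (fun _ => f a) S := by
  classical
  set A : Set (EuclideanSpace ℝ (Fin 2)) := {y | y ∈ S ∧ f y = f a} with hA
  have hAopen : IsOpen A := by
    rw [Metric.isOpen_iff]
    rintro y ⟨hyS, hyf⟩
    obtain ⟨ρ, hρ, hsub⟩ := Metric.isOpen_iff.1 hSo y hyS
    refine ⟨ρ, hρ, fun z hz => ⟨hsub hz, ?_⟩⟩
    rw [const_on_ball hder hsub hz (mem_ball_self hρ), hyf]
  have hVopen : IsOpen {y | f y ≠ f a} := isOpen_ne_fun hf continuous_const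
  intro z hz
  by_contra hne
  rcases hSc A {y | f y ≠ f a} hAopen hVopen
      (fun y hy => by
        by_cases h : f y = f a
        · exact Or.inl ⟨hy, h⟩
        · exact Or.inr h)
      ⟨a, ha, ha, rfl⟩ ⟨z, hz, hne⟩ with ⟨w, _, ⟨_, hw1⟩, hw2⟩
  exact hw2 hw1

lemma compl_connected (C : Set ℝ) {t : ℝ} (ht : t ∉ C) :
    IsConnected {q : EuclideanSpace ℝ (Fin 2) | q 0 ∈ C ∧ q 1 ∈ C}ᶜ := by
  set V : ℝ → Set (EuclideanSpace ℝ (Fin 2)) := fun z => Set.range (fun b => pt z b) with hV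
  set H : ℝ → Set (EuclideanSpace ℝ (Fin 2)) := fun z => Set.range (fun a => pt a z) with hH
  have hVc : ∀ z, IsConnected (V z) := fun z => isConnected_range (cont_pt_right z)
  have hHc : ∀ z, IsConnected (H z) := fun z => isConnected_range (cont_pt_left z)
  have hKc : IsConnected (V t ∪ H t) :=
    IsConnected.union ⟨pt t t, ⟨t, rfl⟩, ⟨t, rfl⟩⟩ (hVc t) (hHc t)
  set s : {z : ℝ // z ∉ C} → Set (EuclideanSpace ℝ (Fin 2)) :=
    fun z => ((V t ∪ H t) ∪ V z.1) ∪ H z.1 with hs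
  have hsc : ∀ z, IsPreconnected (s z) := by
    intro z
    refine (IsConnected.union ?_ (IsConnected.union ?_ hKc (hVc z.1)) (hHc z.1)).isPreconnected
    · exact ⟨pt t z.1, Or.inl (Or.inl ⟨z.1, rfl⟩), ⟨t, rfl⟩⟩
    · exact ⟨pt z.1 t, Or.inr ⟨z.1, rfl⟩, ⟨t, rfl⟩⟩
  have hmem : ∀ z, pt t t ∈ s z := fun z => Or.inl (Or.inl (Or.inl ⟨t, rfl⟩))
  have heq : {q : EuclideanSpace ℝ (Fin 2) | q 0 ∈ C ∧ q 1 ∈ C}ᶜ = ⋃ z, s z := by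
    ext q
    simp only [Set.mem_compl_iff, Set.mem_setOf_eq, not_and_or, Set.mem_iUnion]
    constructor
    · rintro (h | h)
      · exact ⟨⟨q 0, h⟩, Or.inl (Or.inr ⟨q 1, pt_eta q⟩)⟩
      · exact ⟨⟨q 1, h⟩, Or.inr ⟨q 0, pt_eta q⟩⟩
    · rintro ⟨z, ((⟨b, rfl⟩ | ⟨a, rfl⟩) | ⟨b, rfl⟩) | ⟨a, rfl⟩⟩
      · exact Or.inl ht
      · exact Or.inr ht
      · exact Or.inl z.2
      · exact Or.inr z.2
  rw [heq]
  haveI : Nonempty {z : ℝ // z ∉ C} := ⟨⟨t, ht⟩⟩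
  exact ⟨⟨pt t t, Set.mem_iUnion.2 ⟨⟨t, ht⟩, hmem _⟩⟩,
    isPreconnected_iUnion ⟨pt t t, Set.mem_iInter.2 hmem⟩ hsc⟩

lemma llip_const (c : ℝ) (x : EuclideanSpace ℝ (Fin 2)) : LLip (fun _ => c) x = 0 := by
  refine le_antisymm (iInf_le_of_le 1 (iInf_le_of_le one_pos ?_)) (zero_le ..)
  refine iSup_le fun u => iSup_le fun _ => iSup_le fun v => iSup_le fun _ => iSup_le fun _ => ?_
  simp

lemma compl_dense (C : Set ℝ) (hnd : interior C = ∅) :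
    Dense {q : EuclideanSpace ℝ (Fin 2) | q 0 ∈ C ∧ q 1 ∈ C}ᶜ := by
  have hCd : Dense Cᶜ := interior_eq_empty_iff_dense_compl.1 hnd
  rw [Metric.dense_iff]
  intro x r hr
  obtain ⟨y, hy1, hy2⟩ := Metric.dense_iff.1 hCd (x 0) r hr
  refine ⟨pt y (x 1), ?_, ?_⟩
  · rw [mem_ball]
    calc dist (pt y (x 1)) x ≤ dist y (x 0) + dist (x 1) (x 1) := dist_le_coord _ _
      _ < r := by rw [dist_self, add_zero]; exact mem_ball.1 hy1
  · simp only [Set.mem_compl_iff, Set.mem_setOf_eq, not_and_or]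
    exact Or.inl hy2

lemma coord_cont (i : Fin 2) : Continuous fun q : EuclideanSpace ℝ (Fin 2) => q i :=
  (continuous_apply i).comp (EuclideanSpace.equiv (Fin 2) ℝ).continuous

theorem cantor_square_quasiDense_not_LLip_one (C : Set ℝ) (hC : IsClosed C)
    (hnd : interior C = ∅) (hpos : 0 < volume C)
    (hq : ∀ x ∈ C, ∀ U : Set ℝ, IsOpen U → x ∈ U → 0 < volume (C ∩ U)) :
    (∀ p ∈ {q : EuclideanSpace ℝ (Fin 2) | q 0 ∈ C ∧ q 1 ∈ C},
        ∀ U : Set (EuclideanSpace ℝ (Fin 2)), IsOpen U → p ∈ U →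
          0 < volume ({q : EuclideanSpace ℝ (Fin 2) | q 0 ∈ C ∧ q 1 ∈ C} ∩ U)) ∧
      IsConnected {q : EuclideanSpace ℝ (Fin 2) | q 0 ∈ C ∧ q 1 ∈ C}ᶜ ∧
      ¬ ∃ f : EuclideanSpace ℝ (Fin 2) → ℝ, Continuous f ∧
          ∀ x, LLip f x = (if x ∈ {q : EuclideanSpace ℝ (Fin 2) | q 0 ∈ C ∧ q 1 ∈ C}
            then 1 else 0) := by
  have hCne : C ≠ Set.univ := by
    intro h
    rw [h, interior_univ] at hnd
    exact (Set.univ_nonempty).ne_empty hnd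
  obtain ⟨t, ht⟩ := (Set.ne_univ_iff_exists_notMem C).1 hCne
  set T : Set (EuclideanSpace ℝ (Fin 2)) := {q | q 0 ∈ C ∧ q 1 ∈ C} with hT
  have hTclosed : IsClosed T := by
    have : T = (fun q : EuclideanSpace ℝ (Fin 2) => q 0) ⁻¹' C ∩
        (fun q : EuclideanSpace ℝ (Fin 2) => q 1) ⁻¹' C := rfl
    rw [this]
    exact (hC.preimage (coord_cont 0)).inter (hC.preimage (coord_cont 1))
  refine ⟨?_, compl_connected C ht, ?_⟩
  · intro p hp U hU hpU
    obtain ⟨ε, hε, hball⟩ := Metric.isOpen_iff.1 hU p hpU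
    set A := C ∩ ball (p 0) (ε / 2) with hA
    set B := C ∩ ball (p 1) (ε / 2) with hB
    have hApos : 0 < volume A := hq (p 0) hp.1 _ isOpen_ball (mem_ball_self (by linarith))
    have hBpos : 0 < volume B := hq (p 1) hp.2 _ isOpen_ball (mem_ball_self (by linarith))
    have hsub : {q : EuclideanSpace ℝ (Fin 2) | q 0 ∈ A ∧ q 1 ∈ B} ⊆ T ∩ U := by
      rintro q ⟨⟨hq0, hq0b⟩, hq1, hq1b⟩
      refine ⟨⟨hq0, hq1⟩, hball ?_⟩
      rw [mem_ball]
      calc dist q p ≤ dist (q 0) (p 0) + dist (q 1) (p 1) := dist_le_coord _ _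
        _ < ε / 2 + ε / 2 := add_lt_add (mem_ball.1 hq0b) (mem_ball.1 hq1b)
        _ = ε := add_halves ε
    calc (0 : ℝ≥0∞) < volume A * volume B := ENNReal.mul_pos hApos.ne' hBpos.ne'
      _ = volume {q : EuclideanSpace ℝ (Fin 2) | q 0 ∈ A ∧ q 1 ∈ B} :=
        (vol_prod_set A B (hC.measurableSet.inter measurableSet_ball)
          (hC.measurableSet.inter measurableSet_ball)).symm
      _ ≤ volume (T ∩ U) := measure_mono hsub
  · rintro ⟨f, hf, hLL⟩
    have hSopen : IsOpen Tᶜ := hTclosed.isOpen_compl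
    have hder : ∀ x ∈ Tᶜ, HasFDerivAt f (0 : EuclideanSpace ℝ (Fin 2) →L[ℝ] ℝ) x := by
      intro x hx
      refine llip_zero_fderiv ?_
      rw [hLL x, if_neg hx]
    have haS : pt t t ∈ Tᶜ := by
      simp only [Set.mem_compl_iff, hT, Set.mem_setOf_eq, not_and_or]
      exact Or.inl ht
    have heqon := const_on_S hf hSopen (compl_connected C ht).isPreconnected hder haS
    have hfc : f = fun _ => f (pt t t) :=
      Continuous.ext_on (compl_dense C hnd) hf continuous_const heqon
    obtain ⟨c, hc⟩ : C.Nonempty := by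
      rw [Set.nonempty_iff_ne_empty]
      intro h
      rw [h] at hpos
      simp at hpos
    have h1 := hLL (pt c c)
    rw [if_pos (show pt c c ∈ T from ⟨hc, hc⟩), hfc, llip_const] at h1
    exact one_ne_zero h1.symm
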